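/- arXiv:1603.05811 — 3 statements merged into one kernel-verified Lean document; each statement's English description precedes it below -/
import Mathlib

section
/- Every open subgroup of the profinite group $\prod_p \mathbb{F}_p$ (product over all primes, each $\mathbb{F}_p$ with the discrete topology, product topology) is of the form $C_\Sigma = \prod_{p \in \Sigma} \mathbb{F}_p \times \prod_{p \notin \Sigma} \{0\}$ for some cofinite set $\Sigma$ of primes. -/
/-- Each `ZMod n` carries the discrete topology. -/
instance zmodTopSpace (n : ℕ) : TopologicalSpace (ZMod n) := ⊥

instance zmodDiscrete (n : ℕ) : DiscreteTopology (ZMod n) := ⟨rfl⟩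

open Classical in
lemma single_mem_of_mem (U : AddSubgroup (∀ p : Nat.Primes, ZMod p))
    (F : Finset Nat.Primes)
    (hV : ∀ x : ∀ p : Nat.Primes, ZMod p, (∀ q ∈ F, x q = 0) → x ∈ U)
    (u : ∀ p : Nat.Primes, ZMod p) (hu : u ∈ U) (p : Nat.Primes) :
    Pi.single p (u p) ∈ U := by
  haveI : Fact (p : ℕ).Prime := ⟨p.2⟩
  by_cases hp : p ∈ F
  · set M : ℕ := ∏ q ∈ F.erase p, (q : ℕ) with hM
    have hMne : (M : ZMod p) ≠ 0 := by
      rw [Ne, ZMod.natCast_eq_zero_iff]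
      intro hdvd
      have hcop : Nat.Coprime (p : ℕ) M := by
        apply Nat.Coprime.prod_right
        intro q hq
        have hqp : (q : ℕ) ≠ (p : ℕ) := fun h =>
          (Finset.mem_erase.mp hq).1 (Subtype.ext h)
        exact (Nat.coprime_primes p.2 q.2).mpr (fun h => hqp h.symm)
      exact Nat.Prime.one_lt p.2 |>.ne' (Nat.Coprime.eq_one_of_dvd hcop hdvd)
    set n : ℕ := ((M : ZMod p)⁻¹).val * M with hn
    have hn1 : (n : ZMod p) = 1 := by
      rw [hn]
      push_cast
      rw [ZMod.natCast_zmod_val]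
      exact inv_mul_cancel₀ hMne
    have hnq : ∀ q ∈ F, q ≠ p → (n : ZMod (q : ℕ)) = 0 := by
      intro q hq hqp
      rw [hn]
      push_cast
      have : ((M : ℕ) : ZMod (q : ℕ)) = 0 := by
        rw [ZMod.natCast_eq_zero_iff]
        exact Finset.dvd_prod_of_mem _ (Finset.mem_erase.mpr ⟨hqp, hq⟩)
      rw [this, mul_zero]
    have hnu : n • u ∈ U := AddSubgroup.nsmul_mem U hu n
    have hdiff : n • u - Pi.single p (u p) ∈ U := by
      apply hV
      intro q hq
      by_cases hqp : q = p
      · subst hqp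
        simp only [Pi.sub_apply, Pi.smul_apply, Pi.single_eq_same]
        rw [nsmul_eq_mul, hn1, one_mul, sub_self]
      · simp only [Pi.sub_apply, Pi.smul_apply, Pi.single_eq_of_ne hqp]
        rw [nsmul_eq_mul, hnq q hq hqp, zero_mul, sub_zero]
    have := sub_sub_cancel (n • u) (Pi.single p (u p)) ▸ AddSubgroup.sub_mem U hnu hdiff
    exact this
  · apply hV
    intro q hq
    exact Pi.single_eq_of_ne (by rintro rfl; exact hp hq) _

/-- Every open subgroup of the profinite group `∏_p 𝔽_p` (product over all primes, product
topology, each factor discrete) is of the form `C_Σ = {x | ∀ p ∉ Σ, x_p = 0}` for some cofinite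
set `Σ` of primes. -/
theorem open_subgroup_eq_pi (U : AddSubgroup (∀ p : Nat.Primes, ZMod p))
    (hU : IsOpen (U : Set (∀ p : Nat.Primes, ZMod p))) :
    ∃ S : Set Nat.Primes, Sᶜ.Finite ∧ U = AddSubgroup.pi Sᶜ (fun _ => ⊥) := by
  classical
  obtain ⟨F, v, hv, hpi⟩ := isOpen_pi_iff.mp hU 0 U.zero_mem
  have hV : ∀ x : ∀ p : Nat.Primes, ZMod p, (∀ q ∈ F, x q = 0) → x ∈ U := by
    intro x hx
    apply hpi
    intro q hq
    rw [hx q hq]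
    exact (hv q hq).2
  refine ⟨{p : Nat.Primes | ∀ a : ZMod p, Pi.single p a ∈ U}, ?_, ?_⟩
  · apply Set.Finite.subset F.finite_toSet
    intro p hp
    by_contra hpF
    exact hp (fun a => hV _ (fun q hq => Pi.single_eq_of_ne (by rintro rfl; exact hpF hq) _))
  · ext x
    simp only [AddSubgroup.mem_pi, Set.mem_compl_iff, Set.mem_setOf_eq,
      AddSubgroup.mem_bot]
    constructor
    · intro hx p hp
      by_contra hxp
      haveI : Fact (p : ℕ).Prime := ⟨p.2⟩
      apply hp
      intro a
      have hsingle : Pi.single p (x p) ∈ U := single_mem_of_mem U F hV x hx p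
      have : Pi.single p a = (a * (x p)⁻¹).val • (Pi.single p (x p) : ∀ q : Nat.Primes, ZMod q) := by
        funext q
        by_cases hq : q = p
        · subst hq
          simp only [Pi.single_eq_same, Pi.smul_apply]
          rw [nsmul_eq_mul, ZMod.natCast_zmod_val, mul_assoc,
            inv_mul_cancel₀ hxp, mul_one]
        · simp [Pi.single_eq_of_ne hq]
      rw [this]
      exact AddSubgroup.nsmul_mem U hsingle _
    · intro hx
      have hmain : x = (x - ∑ q ∈ F, Pi.single q (x q)) + ∑ q ∈ F, Pi.single q (x q) := by
        ring
      rw [hmain]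
      apply AddSubgroup.add_mem
      · apply hV
        intro q hq
        simp only [Pi.sub_apply, Finset.sum_apply, Finset.sum_pi_single, hq, if_pos, sub_self]
      · apply AddSubgroup.sum_mem
        intro q hq
        by_cases hqS : ∀ a : ZMod q, Pi.single q a ∈ U
        · exact hqS _
        · rw [hx q hqS]
          simp only [Pi.single_zero]
          exact U.zero_mem
end

section
/- Every closed subgroup of the profinite group $\prod_p \mathbb{F}_p$ is of the form $C_\Sigma = \prod_{p \in \Sigma} \mathbb{F}_p \times \prod_{p \notin \Sigma} \{0\}$ for some set $\Sigma$ of primes. -/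
open Classical in
lemma single_mem_of_closed (C : AddSubgroup (∀ p : Nat.Primes, ZMod p))
    (hC : IsClosed (C : Set (∀ p : Nat.Primes, ZMod p)))
    (p : Nat.Primes) (x : ∀ p : Nat.Primes, ZMod p) (hx : x ∈ C) (hxp : x p ≠ 0)
    (a : ZMod p) : Pi.single p a ∈ C := by
  haveI : Fact p.1.Prime := ⟨p.2⟩
  apply hC.closure_subset
  rw [mem_closure_iff]
  intro o ho hmem
  obtain ⟨I, u, hu, hsub⟩ := isOpen_pi_iff.mp ho _ hmem
  set c : ZMod p := a * (x p)⁻¹ with hc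
  set N : ℕ := (∏ q ∈ I.erase p, (q : ℕ)) ^ (p.1 - 1) * c.val with hN
  refine ⟨N • x, hsub ?_, C.nsmul_mem hx N⟩
  intro i hi
  have hz : (N • x) i = Pi.single (M := fun q : Nat.Primes => ZMod q) p a i := by
    rcases eq_or_ne i p with rfl | hne
    · simp only [Pi.smul_apply, Pi.single_eq_same]
      rw [nsmul_eq_mul, hN, Nat.cast_mul, Nat.cast_pow]
      have hprod : ((∏ q ∈ I.erase i, (q : ℕ) : ℕ) : ZMod i) ≠ 0 := by
        push_cast
        rw [Finset.prod_ne_zero_iff]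
        intro q hq
        have hq' : q ≠ i := Finset.ne_of_mem_erase hq
        rw [Ne, ZMod.natCast_eq_zero_iff]
        intro hdvd
        exact hq' (Subtype.ext ((Nat.prime_dvd_prime_iff_eq i.2 q.2).mp hdvd).symm)
      rw [ZMod.pow_card_sub_one_eq_one hprod, one_mul, ZMod.natCast_val, ZMod.cast_id,
        hc, mul_assoc, inv_mul_cancel₀ hxp, mul_one]
    · have hNi : ((N : ℕ) : ZMod i) = 0 := by
        haveI : Fact i.1.Prime := ⟨i.2⟩
        rw [ZMod.natCast_eq_zero_iff]
        refine Dvd.dvd.mul_right ?_ _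
        calc (i.1 : ℕ) ∣ ∏ q ∈ I.erase p, (q : ℕ) :=
              Finset.dvd_prod_of_mem _ (Finset.mem_erase.mpr ⟨hne, hi⟩)
          _ ∣ (∏ q ∈ I.erase p, (q : ℕ)) ^ (p.1 - 1) :=
              dvd_pow_self _ (Nat.sub_ne_zero_of_lt p.2.one_lt)
      rw [Pi.smul_apply, nsmul_eq_mul, hNi, zero_mul, Pi.single_eq_of_ne hne]
  rw [hz]
  exact (hu i hi).2

/-- Every closed subgroup of the profinite group `∏_p 𝔽_p` (product over all primes, product
topology, each factor discrete) is of the form `C_Σ = {x | ∀ p ∉ Σ, x_p = 0}` for some set `Σ`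
of primes. -/
theorem closed_subgroup_eq_pi (C : AddSubgroup (∀ p : Nat.Primes, ZMod p))
    (hC : IsClosed (C : Set (∀ p : Nat.Primes, ZMod p))) :
    ∃ S : Set Nat.Primes, C = AddSubgroup.pi Sᶜ (fun _ => ⊥) := by
  classical
  refine ⟨{p | ∃ x ∈ C, x p ≠ 0}, ?_⟩
  ext y
  rw [AddSubgroup.mem_pi]
  constructor
  · intro hy p hp
    rw [AddSubgroup.mem_bot]
    by_contra h
    exact hp ⟨y, hy, h⟩
  · intro hy
    apply hC.closure_subset
    rw [mem_closure_iff]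
    intro o ho hmem
    obtain ⟨I, u, hu, hsub⟩ := isOpen_pi_iff.mp ho _ hmem
    refine ⟨∑ q ∈ I, Pi.single q (y q), hsub ?_, ?_⟩
    · intro i hi
      rw [Finset.sum_apply, Finset.sum_pi_single, if_pos (Finset.mem_coe.mp hi)]
      exact (hu i hi).2
    · apply sum_mem
      intro q hq
      by_cases hqs : ∃ x ∈ C, x q ≠ 0
      · obtain ⟨x, hx, hxq⟩ := hqs
        exact single_mem_of_closed C hC q x hx hxq _
      · have : y q = 0 := by
          have := hy q hqs
          rwa [AddSubgroup.mem_bot] at this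
        rw [this, Pi.single_zero]
        exact C.zero_mem
end

section
/- Let G be a profinite group and $f: G \to \prod_p \mathbb{F}_p$ a continuous group homomorphism such that every element of the image of f has finite order. Then f has finite image, and hence f factors through $\bigoplus_p \mathbb{F}_p$, i.e., all but finitely many components of f are zero. -/
/-- Let `G` be a profinite group and `f : G → ∏_p 𝔽_p` a continuous homomorphism all of whose
values have finite order.  Then `f` has finite image, and all but finitely many components of
`f` vanish (so `f` factors through `⊕_p 𝔽_p`). -/
theorem continuous_hom_torsion_image_finite (G : Type*) [Group G] [TopologicalSpace G]
    [IsTopologicalGroup G] [CompactSpace G] [T2Space G] [TotallyDisconnectedSpace G]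
    (f : G → ∀ p : Nat.Primes, ZMod p) (hf : Continuous f)
    (hhom : ∀ a b : G, f (a * b) = f a + f b)
    (htors : ∀ a : G, IsOfFinAddOrder (f a)) :
    (Set.range f).Finite ∧ {p : Nat.Primes | ∃ a : G, f a p ≠ 0}.Finite := by
  classical
  have f1 : f 1 = 0 := by
    have := hhom 1 1
    rw [mul_one] at this
    exact (right_eq_add.mp this)
  have fpow : ∀ (a : G) (n : ℕ), f (a ^ n) = n • f a := by
    intro a n
    induction n with
    | zero => simpa using f1
    | succ k ih => rw [pow_succ, hhom, ih, succ_nsmul]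
  have flist : ∀ l : List G, f l.prod = (l.map f).sum := by
    intro l
    induction l with
    | nil => simpa using f1
    | cons x xs ih => rw [List.prod_cons, hhom, ih, List.map_cons, List.sum_cons]
  set S : Set Nat.Primes := {p : Nat.Primes | ∃ a : G, f a p ≠ 0} with hS
  -- each torsion element has finitely many nonzero components
  have hsupp : ∀ a : G, {p : Nat.Primes | f a p ≠ 0}.Finite := by
    intro a
    obtain ⟨n, hn, hna⟩ := (isOfFinAddOrder_iff_nsmul_eq_zero).mp (htors a)
    have hsub : {p : Nat.Primes | f a p ≠ 0} ⊆ {p : Nat.Primes | (p : ℕ) ∣ n} := by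
      intro p hp
      have h0 : n • f a p = 0 := by
        have := congrFun hna p
        simpa using this
      haveI : Fact (p.1.Prime) := ⟨p.2⟩
      rw [nsmul_eq_mul] at h0
      rcases mul_eq_zero.mp h0 with h | h
      · exact (ZMod.natCast_eq_zero_iff n p.1).mp h
      · exact absurd h hp
    refine Set.Finite.subset ?_ hsub
    have hinj : Set.InjOn (fun p : Nat.Primes => (p : ℕ)) {p : Nat.Primes | (p : ℕ) ∣ n} :=
      fun p _ q _ h => Nat.Primes.coe_nat_injective h
    refine Set.Finite.of_finite_image ?_ hinj
    exact Set.Finite.subset (Set.finite_Iic n)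
      (by rintro m ⟨p, hp, rfl⟩; exact Nat.le_of_dvd hn hp)
  -- the closed sets
  have hCclosed : ∀ p : S, IsClosed {a : G | f a p.1 ≠ 0} := by
    intro p
    have hc : Continuous fun a : G => f a p.1 := (continuous_apply p.1).comp hf
    exact (isClosed_discrete ({0}ᶜ : Set (ZMod p.1.1))).preimage hc
  -- a choice of witnesses
  set a : Nat.Primes → G := fun p =>
    if h : ∃ b : G, f b p ≠ 0 then h.choose else 1 with ha
  have haS : ∀ p : Nat.Primes, p ∈ S → f (a p) p ≠ 0 := by
    intro p hp
    have hp' : ∃ b : G, f b p ≠ 0 := hp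
    simp only [ha, dif_pos hp']
    exact hp'.choose_spec
  -- the intersection over all of S is nonempty
  have hinter : (⋂ p : S, {b : G | f b p.1 ≠ 0}).Nonempty := by
    rw [Set.nonempty_iff_ne_empty]
    intro hempty
    obtain ⟨u, hu⟩ := isCompact_univ.elim_finite_subfamily_closed _ hCclosed
      (by rw [Set.univ_inter]; exact hempty)
    rw [Set.univ_inter] at hu
    -- construct an element in the finite intersection
    set F : Finset Nat.Primes := u.image Subtype.val with hF
    have hFS : ∀ p ∈ F, p ∈ S := by
      intro p hp
      obtain ⟨q, _, rfl⟩ := Finset.mem_image.mp hp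
      exact q.2
    set m : Nat.Primes → ℕ := fun p => ∏ q ∈ F.erase p, (q : ℕ) with hm
    set g : G := (F.toList.map (fun q => a q ^ m q)).prod with hg
    have hfg : f g = ∑ q ∈ F, f (a q ^ m q) := by
      rw [hg, flist, List.map_map]
      exact Finset.sum_map_toList F (fun q => f (a q ^ m q))
    have hgp : ∀ p ∈ F, f g p ≠ 0 := by
      intro p hp
      haveI : Fact (p.1.Prime) := ⟨p.2⟩
      have hcomp : f g p = ∑ q ∈ F, ((m q : ZMod p.1) * f (a q) p) := by
        rw [hfg, Finset.sum_apply]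
        refine Finset.sum_congr rfl fun q _ => ?_
        rw [fpow]
        simp [nsmul_eq_mul]
      rw [hcomp, Finset.sum_eq_single p]
      · have hcop : ¬ (p : ℕ) ∣ m p := by
          intro hdvd
          obtain ⟨r, hrF, hpr⟩ := (Nat.Prime.prime p.2).exists_mem_finset_dvd hdvd
          have hpr' : p = r :=
            Nat.Primes.coe_nat_injective ((Nat.prime_dvd_prime_iff_eq p.2 r.2).mp hpr)
          exact (Finset.mem_erase.mp hrF).1 hpr'.symm
        have hm0 : (m p : ZMod p.1) ≠ 0 :=
          fun h => hcop ((ZMod.natCast_eq_zero_iff _ _).mp h)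
        exact mul_ne_zero hm0 (haS p (hFS p hp))
      · intro q hq hqp
        have hdvd : ((p : ℕ)) ∣ m q :=
          Finset.dvd_prod_of_mem _ (Finset.mem_erase.mpr ⟨fun h => hqp h.symm, hp⟩)
        rw [(ZMod.natCast_eq_zero_iff _ _).mpr hdvd, zero_mul]
      · intro h
        exact absurd hp h
    -- g lies in the supposedly empty intersection
    have hmem : g ∈ ⋂ i ∈ u, {b : G | f b i.1 ≠ 0} :=
      Set.mem_iInter₂.mpr fun i hi => hgp i.1 (Finset.mem_image.mpr ⟨i, hi, rfl⟩)
    rw [hu] at hmem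
    exact hmem
  -- conclude S is finite
  obtain ⟨a0, ha0⟩ := hinter
  have hSfin : S.Finite := by
    refine Set.Finite.subset (hsupp a0) fun p hp => ?_
    exact Set.mem_iInter.mp ha0 ⟨p, hp⟩
  refine ⟨?_, hSfin⟩
  -- range finite: restriction to S is injective on range f
  haveI := hSfin.fintype
  haveI : ∀ p : S, NeZero (p.1 : ℕ) := fun p => ⟨p.1.2.pos.ne'⟩
  have hinj : Set.InjOn (fun x : ∀ p : Nat.Primes, ZMod p => fun p : S => x p.1)
      (Set.range f) := by
    rintro x ⟨b, rfl⟩ y ⟨c, rfl⟩ h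
    funext p
    by_cases hp : p ∈ S
    · exact congrFun h ⟨p, hp⟩
    · have hb : f b p = 0 := by by_contra hcon; exact hp ⟨b, hcon⟩
      have hc : f c p = 0 := by by_contra hcon; exact hp ⟨c, hcon⟩
      rw [hb, hc]
  refine Set.Finite.of_finite_image ?_ hinj
  exact Set.toFinite _
end
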